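/- Let N = 2n+2 with n ≥ 1, and let ω_k = 2 sin(kπ/N). There exist no multi-indices Θ, θ : {1, …, N−1} → ℤ_{≥0} such that Σ_{k=1}^{N−1}(Θ_k + θ_k) = 3, μ(Θ, θ) ≡ 0 (mod N), and ν(Θ, θ) = 0. -/

import Mathlib

open Finset Real

/-- The eigenvalue datum `ν(Θ, θ) = Σ_{k=1}^{N/2−1} ω_k (θ_k − θ_{N−k} − Θ_k + Θ_{N−k})
+ ω_{N/2}(θ_{N/2} − Θ_{N/2})` for the periodic FPU lattice with `N = 2n+2` particles,
where `ω_k = 2 sin(kπ/N)`.  (So `i·ν(Θ,θ)` are the eigenvalues of `ad_{H₂}` on the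
monomials `z^Θ ζ^θ`.) -/
noncomputable def fpuNu (n : ℕ) (Θ θ : ℕ → ℕ) : ℝ :=
  (∑ k ∈ Finset.Icc 1 n, 2 * Real.sin (k * π / (2 * n + 2)) *
      ((θ k : ℝ) - θ (2 * n + 2 - k) - Θ k + Θ (2 * n + 2 - k))) +
    2 * Real.sin ((n + 1) * π / (2 * n + 2)) * ((θ (n + 1) : ℝ) - Θ (n + 1))

/-- The eigenvalue datum `μ(Θ, θ) = Σ_{k=1}^{N/2−1} k (Θ_k + Θ_{N−k} − θ_k − θ_{N−k})
+ (N/2)(Θ_{N/2} − θ_{N/2})`, regarded modulo `N`, for the periodic FPU lattice with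
`N = 2n+2` particles.  (So `e^{2πiμ(Θ,θ)/N}` are the eigenvalues of pullback by the
cyclic symmetry `R` on the monomials `z^Θ ζ^θ`.) -/
def fpuMu (n : ℕ) (Θ θ : ℕ → ℕ) : ℤ :=
  (∑ k ∈ Finset.Icc 1 n, (k : ℤ) *
      ((Θ k : ℤ) + Θ (2 * n + 2 - k) - θ k - θ (2 * n + 2 - k))) +
    (n + 1 : ℤ) * ((Θ (n + 1) : ℤ) - θ (n + 1))

namespace NoCubicAux

/-- `ω_a = 2 sin(aπ/N)` with `N = 2n+2`. -/
noncomputable def wf (n a : ℕ) : ℝ := 2 * Real.sin (a * π / (2 * n + 2))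

/-- The `ν`-coefficient of `θ_j − Θ_j` for `j ∈ [1, 2n+1]`. -/
noncomputable def HW (n j : ℕ) : ℝ := if j ≤ n + 1 then wf n j else -wf n (2*n+2-j)

/-- The `μ`-coefficient of `Θ_j − θ_j` for `j ∈ [1, 2n+1]`. -/
def HM (n j : ℕ) : ℤ := min (j:ℤ) (2*(n:ℤ)+2-j)

/-- Combined `ν`-coefficient on the doubled index set `[1, 4n+2]`. -/
noncomputable def WW (n j : ℕ) : ℝ := if j ≤ 2*n+1 then -HW n j else HW n (j-(2*n+1))

/-- Combined `μ`-coefficient on the doubled index set `[1, 4n+2]`. -/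
def MM (n j : ℕ) : ℤ := if j ≤ 2*n+1 then HM n j else -HM n (j-(2*n+1))

/-- The multi-index pair `(Θ, θ)` combined into one function on `[1, 4n+2]`. -/
def FF (n : ℕ) (Θ θ : ℕ → ℕ) (j : ℕ) : ℕ := if j ≤ 2*n+1 then Θ j else θ (j-(2*n+1))

lemma wf_pos {n a : ℕ} (h1 : 1 ≤ a) (h2 : a ≤ n + 1) : 0 < wf n a := by
  have hπ := Real.pi_pos
  have hx : (1:ℝ) ≤ (a:ℝ) := by exact_mod_cast h1
  have hden : (0:ℝ) < 2*n+2 := by positivity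
  apply mul_pos two_pos
  apply Real.sin_pos_of_pos_of_lt_pi
  · apply div_pos (mul_pos (by linarith) hπ) hden
  · rw [div_lt_iff₀ hden]
    have hxn : (a:ℝ) ≤ n+1 := by exact_mod_cast h2
    nlinarith

/-- If `0 < A, B`, `A, B, C ≤ π/2` and `C ≤ A + B`, then `sin A + sin B ≠ sin C`. -/
lemma sin_ineq {A B C : ℝ} (hA0 : 0 < A) (hB0 : 0 < B) (hC0 : 0 < C) (hC2 : C ≤ π/2)
    (hA2 : A ≤ π/2) (hB2 : B ≤ π/2) (hCle : C ≤ A + B)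
    (h : Real.sin A + Real.sin B = Real.sin C) : False := by
  have hπ := Real.pi_pos
  have hsA : 0 < Real.sin A := Real.sin_pos_of_pos_of_lt_pi hA0 (by linarith)
  have hsB : 0 < Real.sin B := Real.sin_pos_of_pos_of_lt_pi hB0 (by linarith)
  rcases le_or_gt (A+B) (π/2) with hab | hab
  · have h1 : Real.sin C ≤ Real.sin (A+B) := by
      apply Real.strictMonoOn_sin.monotoneOn ⟨by linarith, hC2⟩ ⟨by linarith, hab⟩ hCle
    have h2 : Real.sin (A+B) = Real.sin A * Real.cos B + Real.cos A * Real.sin B :=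
      Real.sin_add A B
    have hcB : Real.cos B ≤ 1 := Real.cos_le_one B
    have hcA : Real.cos A < 1 := by
      have h3 : Real.sin (π/2 - A) < Real.sin (π/2) :=
        Real.strictMonoOn_sin ⟨by linarith, by linarith⟩ ⟨by linarith, le_rfl⟩ (by linarith)
      rw [Real.sin_pi_div_two_sub, Real.sin_pi_div_two] at h3
      exact h3
    have h4 : Real.sin A * Real.cos B ≤ Real.sin A * 1 :=
      mul_le_mul_of_nonneg_left hcB hsA.le
    have h5 : Real.cos A * Real.sin B < 1 * Real.sin B :=
      mul_lt_mul_of_pos_right hcA hsB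
    nlinarith
  · have hBgt : Real.cos A < Real.sin B := by
      have h2 : Real.sin (π/2 - A) < Real.sin B :=
        Real.strictMonoOn_sin ⟨by linarith, by linarith⟩ ⟨by linarith, hB2⟩ (by linarith)
      rwa [Real.sin_pi_div_two_sub] at h2
    have hcA : 0 ≤ Real.cos A := Real.cos_nonneg_of_mem_Icc ⟨by linarith, hA2⟩
    have h3 : 1 ≤ Real.sin A + Real.cos A := by
      nlinarith [Real.sin_sq_add_cos_sq A, mul_nonneg hsA.le (sub_nonneg.mpr (Real.sin_le_one A)),
        mul_nonneg hcA (sub_nonneg.mpr (Real.cos_le_one A))]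
    have h4 : Real.sin C ≤ 1 := Real.sin_le_one C
    linarith

/-- The resonance relation `ω_x + ω_y = ω_z` with `x, y, z ∈ [1, n+1]` forces `x + y < z`. -/
lemma wf_lemma {n x y z : ℕ} (hx1 : 1 ≤ x) (hx2 : x ≤ n+1) (hy1 : 1 ≤ y) (hy2 : y ≤ n+1)
    (hz1 : 1 ≤ z) (hz2 : z ≤ n+1) (h : wf n x + wf n y = wf n z) : x + y < z := by
  by_contra hc
  push_neg at hc
  have hπ := Real.pi_pos
  have hden : (0:ℝ) < 2*(n:ℝ)+2 := by positivity
  have key : ∀ w : ℕ, 1 ≤ w → w ≤ n+1 →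
      0 < (w:ℝ) * π / (2*(n:ℝ)+2) ∧ (w:ℝ) * π / (2*(n:ℝ)+2) ≤ π/2 := by
    intro w hw1 hw2
    have hw1' : (1:ℝ) ≤ (w:ℝ) := by exact_mod_cast hw1
    have hw2' : (w:ℝ) ≤ (n:ℝ)+1 := by exact_mod_cast hw2
    constructor
    · apply div_pos (mul_pos (by linarith) hπ) hden
    · rw [div_le_div_iff₀ hden two_pos]
      nlinarith
  obtain ⟨hA0, hA2⟩ := key x hx1 hx2
  obtain ⟨hB0, hB2⟩ := key y hy1 hy2
  obtain ⟨hC0, hC2⟩ := key z hz1 hz2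
  have hCle : (z:ℝ) * π / (2*(n:ℝ)+2) ≤ (x:ℝ) * π / (2*(n:ℝ)+2) + (y:ℝ) * π / (2*(n:ℝ)+2) := by
    have hzxy : (z:ℝ) ≤ (x:ℝ) + (y:ℝ) := by exact_mod_cast hc
    rw [← add_div, div_le_div_iff₀ hden hden]
    nlinarith [mul_nonneg (mul_nonneg (sub_nonneg.mpr hzxy) Real.pi_pos.le) hden.le]
  apply sin_ineq hA0 hB0 hC0 hC2 hA2 hB2 hCle
  unfold wf at h
  linarith

lemma sum_pair {M : Type*} [AddCommMonoid M] (n : ℕ) (c : ℕ → M) :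
    ∑ k ∈ Icc 1 (2*n+1), c k
      = (∑ k ∈ Icc 1 n, (c k + c (2*n+2-k))) + c (n+1) := by
  rw [show (Icc 1 (2*n+1) : Finset ℕ) = Ioc 0 (2*n+1) from Finset.Icc_add_one_left_eq_Ioc 0 _]
  rw [← Finset.sum_Ioc_consecutive c (by omega : 0 ≤ n+1) (by omega : n+1 ≤ 2*n+1)]
  have h2 : ∑ k ∈ Ioc 0 (n+1), c k = (∑ k ∈ Ioc 0 n, c k) + c (n+1) :=
    Finset.sum_Ioc_succ_top (by omega) _
  have h3 : ∑ k ∈ Ioc (n+1) (2*n+1), c k = ∑ k ∈ Ioc 0 n, c (2*n+2-k) := by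
    apply Finset.sum_nbij' (i := fun k => 2*n+2-k) (j := fun k => 2*n+2-k)
    · intro a ha; simp only [mem_Ioc] at *; omega
    · intro a ha; simp only [mem_Ioc] at *; omega
    · intro a ha; simp only [mem_Ioc] at ha; omega
    · intro a ha; simp only [mem_Ioc] at ha; omega
    · intro a ha; simp only [mem_Ioc] at ha; congr 1; omega
  have h4 : (Icc 1 n : Finset ℕ) = Ioc 0 n := Finset.Icc_add_one_left_eq_Ioc 0 n
  rw [h2, h3, h4, Finset.sum_add_distrib]
  abel

lemma sum_split_shift {M : Type*} [AddCommMonoid M] (m : ℕ) (c : ℕ → M) :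
    ∑ j ∈ Icc 1 (m+m), c j = (∑ j ∈ Icc 1 m, c j) + ∑ j ∈ Icc 1 m, c (j + m) := by
  rw [show (Icc 1 (m+m) : Finset ℕ) = Ioc 0 (m+m) from Finset.Icc_add_one_left_eq_Ioc 0 _,
    show (Icc 1 m : Finset ℕ) = Ioc 0 m from Finset.Icc_add_one_left_eq_Ioc 0 _]
  rw [← Finset.sum_Ioc_consecutive c (by omega : 0 ≤ m) (by omega : m ≤ m + m)]
  congr 1
  have h : Ioc m (m+m) = (Ioc 0 m).map (addLeftEmbedding m) := by
    rw [Finset.map_add_left_Ioc, Nat.add_zero]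
  rw [h, Finset.sum_map]
  apply Finset.sum_congr rfl
  intro j _
  simp only [addLeftEmbedding_apply]
  rw [Nat.add_comm]

lemma extract_step {s : Finset ℕ} {f : ℕ → ℕ} {k : ℕ} (h : ∑ j ∈ s, f j = k + 1) :
    ∃ j0 ∈ s, ∃ g : ℕ → ℕ, (∑ j ∈ s, g j = k) ∧ ∀ j, f j = g j + (if j = j0 then 1 else 0) := by
  have hpos : ∃ j0 ∈ s, f j0 ≠ 0 := by
    by_contra hc
    push_neg at hc
    have h0 : ∑ j ∈ s, f j = 0 := Finset.sum_eq_zero (fun j hj => hc j hj)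
    omega
  obtain ⟨j0, hj0, hf0⟩ := hpos
  refine ⟨j0, hj0, Function.update f j0 (f j0 - 1), ?_, ?_⟩
  · rw [Finset.sum_update_of_mem hj0]
    have h2 : ∑ x ∈ s, f x = (∑ x ∈ s \ {j0}, f x) + f j0 :=
      (Finset.sum_eq_sum_sdiff_singleton_add hj0 f)
    omega
  · intro j
    rcases eq_or_ne j j0 with rfl | hne
    · rw [if_pos rfl, Function.update_self]
      omega
    · simp [Function.update_of_ne hne, hne]

/-- A function summing to `3` over `s` is a sum of three indicator functions. -/
lemma extract_three {s : Finset ℕ} {f : ℕ → ℕ} (h : ∑ j ∈ s, f j = 3) :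
    ∃ j1 ∈ s, ∃ j2 ∈ s, ∃ j3 ∈ s, ∀ j ∈ s,
      f j = (if j = j1 then 1 else 0) + (if j = j2 then 1 else 0) + (if j = j3 then 1 else 0) := by
  obtain ⟨j1, hj1, g1, hg1, hf1⟩ := extract_step (k := 2) h
  obtain ⟨j2, hj2, g2, hg2, hf2⟩ := extract_step (k := 1) hg1
  obtain ⟨j3, hj3, g3, hg3, hf3⟩ := extract_step (k := 0) hg2
  refine ⟨j1, hj1, j2, hj2, j3, hj3, ?_⟩
  intro j hj
  have h0 : g3 j = 0 := (Finset.sum_eq_zero_iff.mp hg3) j hj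
  rw [hf1 j, hf2 j, hf3 j, h0]
  ring

lemma sum_indicator {R : Type*} [NonAssocSemiring R] (s : Finset ℕ) (c : ℕ → R) {j1 : ℕ}
    (h : j1 ∈ s) :
    ∑ j ∈ s, c j * (if j = j1 then 1 else 0) = c j1 := by
  rw [Finset.sum_congr rfl (fun j _ => by rw [mul_ite, mul_one, mul_zero])]
  rw [Finset.sum_ite_eq' s j1 c]
  exact if_pos h

lemma mu_eq (n : ℕ) (Θ θ : ℕ → ℕ) :
    fpuMu n Θ θ = ∑ j ∈ Icc 1 (2*n+1), HM n j * ((Θ j : ℤ) - θ j) := by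
  rw [sum_pair n (fun j => HM n j * ((Θ j : ℤ) - θ j))]
  unfold fpuMu
  congr 1
  · apply Finset.sum_congr rfl
    intro k hk
    simp only [mem_Icc] at hk
    have h1 : HM n k = (k : ℤ) := by
      unfold HM; omega
    have h2 : HM n (2*n+2-k) = (k : ℤ) := by
      unfold HM; omega
    rw [h1, h2]
    ring
  · have h1 : HM n (n+1) = (n:ℤ)+1 := by
      unfold HM; push_cast; omega
    rw [h1]

lemma nu_eq (n : ℕ) (Θ θ : ℕ → ℕ) :
    fpuNu n Θ θ = ∑ j ∈ Icc 1 (2*n+1), HW n j * ((θ j : ℝ) - Θ j) := by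
  rw [sum_pair n (fun j => HW n j * ((θ j : ℝ) - Θ j))]
  unfold fpuNu
  congr 1
  · apply Finset.sum_congr rfl
    intro k hk
    simp only [mem_Icc] at hk
    have h1 : HW n k = wf n k := by
      unfold HW; rw [if_pos (by omega)]
    have h2 : HW n (2*n+2-k) = -wf n k := by
      unfold HW; rw [if_neg (by omega)]
      have : 2*n+2-(2*n+2-k) = k := by omega
      rw [this]
    rw [h1, h2]
    unfold wf
    ring
  · have h1 : HW n (n+1) = wf n (n+1) := by
      unfold HW; rw [if_pos le_rfl]
    rw [h1]
    unfold wf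
    push_cast
    ring

lemma mu_eq2 (n : ℕ) (Θ θ : ℕ → ℕ) :
    fpuMu n Θ θ = ∑ j ∈ Icc 1 (4*n+2), MM n j * (FF n Θ θ j : ℤ) := by
  have h42 : 4*n+2 = (2*n+1) + (2*n+1) := by omega
  rw [mu_eq, h42, sum_split_shift, ← Finset.sum_add_distrib]
  apply Finset.sum_congr rfl
  intro j hj
  simp only [mem_Icc] at hj
  have e1 : MM n j = HM n j := if_pos (by omega)
  have e2 : FF n Θ θ j = Θ j := if_pos (by omega)
  have e3 : MM n (j + (2*n+1)) = -HM n j := by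
    unfold MM
    rw [if_neg (by omega)]
    have : j + (2*n+1) - (2*n+1) = j := by omega
    rw [this]
  have e4 : FF n Θ θ (j + (2*n+1)) = θ j := by
    unfold FF
    rw [if_neg (by omega)]
    congr 1
    omega
  rw [e1, e2, e3, e4]
  ring

lemma nu_eq2 (n : ℕ) (Θ θ : ℕ → ℕ) :
    fpuNu n Θ θ = ∑ j ∈ Icc 1 (4*n+2), WW n j * (FF n Θ θ j : ℝ) := by
  have h42 : 4*n+2 = (2*n+1) + (2*n+1) := by omega
  rw [nu_eq, h42, sum_split_shift, ← Finset.sum_add_distrib]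
  apply Finset.sum_congr rfl
  intro j hj
  simp only [mem_Icc] at hj
  have e1 : WW n j = -HW n j := if_pos (by omega)
  have e2 : FF n Θ θ j = Θ j := if_pos (by omega)
  have e3 : WW n (j + (2*n+1)) = HW n j := by
    unfold WW
    rw [if_neg (by omega)]
    have : j + (2*n+1) - (2*n+1) = j := by omega
    rw [this]
  have e4 : FF n Θ θ (j + (2*n+1)) = θ j := by
    unfold FF
    rw [if_neg (by omega)]
    congr 1
    omega
  rw [e1, e2, e3, e4]
  ring

/-- Each index `t ∈ [1, 4n+2]` carries a frequency index `a ∈ [1, n+1]` with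
`MM t = ±a` and `WW t = ±ω_a`. -/
lemma atom (n : ℕ) {t : ℕ} (h1 : 1 ≤ t) (h2 : t ≤ 4*n+2) :
    ∃ a : ℕ, 1 ≤ a ∧ a ≤ n + 1 ∧ (MM n t = (a:ℤ) ∨ MM n t = -(a:ℤ)) ∧
      (WW n t = wf n a ∨ WW n t = -wf n a) := by
  have key : ∀ u : ℕ, 1 ≤ u → u ≤ 2*n+1 →
      (HM n u = ((min u (2*n+2-u) : ℕ) : ℤ)) ∧
      (HW n u = wf n (min u (2*n+2-u)) ∨ HW n u = -wf n (min u (2*n+2-u))) := by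
    intro u hu1 hu2
    refine ⟨by unfold HM; omega, ?_⟩
    rcases le_or_gt u (n+1) with h3 | h3
    · left
      unfold HW
      rw [if_pos h3]
      have : min u (2*n+2-u) = u := by omega
      rw [this]
    · right
      unfold HW
      rw [if_neg (by omega)]
      have : min u (2*n+2-u) = 2*n+2-u := by omega
      rw [this]
  rcases le_or_gt t (2*n+1) with ht | ht
  · obtain ⟨k1, k2⟩ := key t h1 ht
    refine ⟨min t (2*n+2-t), by omega, by omega, ?_, ?_⟩
    · left
      rw [show MM n t = HM n t from if_pos ht, k1]
    · rw [show WW n t = -HW n t from if_pos ht]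
      rcases k2 with h | h
      · right; rw [h]
      · left; rw [h, neg_neg]
  · set u := t - (2*n+1) with hu
    obtain ⟨k1, k2⟩ := key u (by omega) (by omega)
    refine ⟨min u (2*n+2-u), by omega, by omega, ?_, ?_⟩
    · right
      rw [show MM n t = -HM n u from by unfold MM; rw [if_neg (by omega)], k1]
    · rw [show WW n t = HW n u from by unfold WW; rw [if_neg (by omega)]]
      exact k2

/-- The `μ`-divisibility is impossible once one frequency index exceeds the sum
of the other two. -/
lemma mu_contra {n : ℕ} {a1 a2 a3 : ℕ} {d1 d2 d3 : ℤ}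
    (ha1 : 1 ≤ a1) (hb1 : a1 ≤ n+1) (ha2 : 1 ≤ a2) (hb2 : a2 ≤ n+1)
    (ha3 : 1 ≤ a3) (hb3 : a3 ≤ n+1)
    (hd1 : d1 = (a1:ℤ) ∨ d1 = -(a1:ℤ)) (hd2 : d2 = (a2:ℤ) ∨ d2 = -(a2:ℤ))
    (hd3 : d3 = (a3:ℤ) ∨ d3 = -(a3:ℤ))
    (hdvd : (2*(n:ℤ)+2) ∣ d1 + d2 + d3)
    (hP : a1 + a2 < a3 ∨ a1 + a3 < a2 ∨ a2 + a3 < a1) : False := by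
  obtain ⟨k, hk⟩ := hdvd
  have hub : d1 + d2 + d3 ≤ 3*(n:ℤ)+3 := by rcases hd1 with h|h <;> rcases hd2 with h2|h2 <;>
    rcases hd3 with h3|h3 <;> rw [h, h2, h3] <;> omega
  have hlb : -(3*(n:ℤ)+3) ≤ d1 + d2 + d3 := by rcases hd1 with h|h <;> rcases hd2 with h2|h2 <;>
    rcases hd3 with h3|h3 <;> rw [h, h2, h3] <;> omega
  have hn0 : (0:ℤ) ≤ 2*(n:ℤ)+2 := by positivity
  have hk1 : k ≤ 1 := by
    by_contra hcon
    push_neg at hcon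
    have h2 : (2*(n:ℤ)+2) * 2 ≤ (2*(n:ℤ)+2) * k := mul_le_mul_of_nonneg_left hcon hn0
    linarith [hk ▸ hub]
  have hk2 : -1 ≤ k := by
    by_contra hcon
    push_neg at hcon
    have h2 : (2*(n:ℤ)+2) * k ≤ (2*(n:ℤ)+2) * (-2) :=
      mul_le_mul_of_nonneg_left (by omega) hn0
    linarith [hk ▸ hlb]
  interval_cases k <;>
    rcases hd1 with h|h <;> rcases hd2 with h2|h2 <;> rcases hd3 with h3|h3 <;>
    rw [h, h2, h3] at hk <;> rcases hP with hp|hp|hp <;> omega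

end NoCubicAux

open NoCubicAux in
/-- **No cubic terms in the symmetric resonant normal form.**  There are no multi-indices
`Θ, θ` of total degree `3` with `μ(Θ, θ) ≡ 0 (mod N)` and `ν(Θ, θ) = 0`. -/
theorem no_cubic_symmetric_resonances (n : ℕ) (hn : 1 ≤ n) :
    ¬ ∃ Θ θ : ℕ → ℕ,
      (∑ k ∈ Finset.Icc 1 (2 * n + 1), (Θ k + θ k)) = 3 ∧
      ((2 * n + 2 : ℤ) ∣ fpuMu n Θ θ) ∧
      fpuNu n Θ θ = 0 := by
  rintro ⟨Θ, θ, hdeg, hmu, hnu⟩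
  -- the combined multi-index sums to 3 on the doubled index set
  have hFsum : ∑ j ∈ Icc 1 (4*n+2), FF n Θ θ j = 3 := by
    have h42 : 4*n+2 = (2*n+1) + (2*n+1) := by omega
    rw [h42, sum_split_shift]
    have e1 : ∑ j ∈ Icc 1 (2*n+1), FF n Θ θ j = ∑ j ∈ Icc 1 (2*n+1), Θ j := by
      apply Finset.sum_congr rfl
      intro j hj
      simp only [mem_Icc] at hj
      exact if_pos (by omega)
    have e2 : ∑ j ∈ Icc 1 (2*n+1), FF n Θ θ (j + (2*n+1)) = ∑ j ∈ Icc 1 (2*n+1), θ j := by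
      apply Finset.sum_congr rfl
      intro j hj
      simp only [mem_Icc] at hj
      unfold FF
      rw [if_neg (by omega)]
      congr 1
      omega
    rw [e1, e2, ← Finset.sum_add_distrib]
    exact hdeg
  -- extract the three atoms
  obtain ⟨j1, hj1, j2, hj2, j3, hj3, hrep⟩ := extract_three hFsum
  obtain ⟨hl1, hr1⟩ := mem_Icc.mp hj1
  obtain ⟨hl2, hr2⟩ := mem_Icc.mp hj2
  obtain ⟨hl3, hr3⟩ := mem_Icc.mp hj3
  -- μ as a three-term signed sum
  have hmu3 : fpuMu n Θ θ = MM n j1 + MM n j2 + MM n j3 := by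
    rw [mu_eq2]
    have step : ∀ j ∈ Icc 1 (4*n+2), MM n j * (FF n Θ θ j : ℤ)
        = MM n j * (if j = j1 then (1:ℤ) else 0) + MM n j * (if j = j2 then (1:ℤ) else 0)
          + MM n j * (if j = j3 then (1:ℤ) else 0) := by
      intro j hj
      rw [hrep j hj]
      push_cast
      ring
    rw [Finset.sum_congr rfl step, Finset.sum_add_distrib, Finset.sum_add_distrib,
      sum_indicator _ _ hj1, sum_indicator _ _ hj2, sum_indicator _ _ hj3]
  -- ν as a three-term signed sum
  have hnu3 : WW n j1 + WW n j2 + WW n j3 = 0 := by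
    rw [← hnu, nu_eq2]
    have step : ∀ j ∈ Icc 1 (4*n+2), WW n j * (FF n Θ θ j : ℝ)
        = WW n j * (if j = j1 then (1:ℝ) else 0) + WW n j * (if j = j2 then (1:ℝ) else 0)
          + WW n j * (if j = j3 then (1:ℝ) else 0) := by
      intro j hj
      rw [hrep j hj]
      push_cast
      ring
    rw [Finset.sum_congr rfl step, Finset.sum_add_distrib, Finset.sum_add_distrib,
      sum_indicator _ _ hj1, sum_indicator _ _ hj2, sum_indicator _ _ hj3]
  obtain ⟨a1, ha11, ha12, hm1, hw1⟩ := atom n hl1 hr1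
  obtain ⟨a2, ha21, ha22, hm2, hw2⟩ := atom n hl2 hr2
  obtain ⟨a3, ha31, ha32, hm3, hw3⟩ := atom n hl3 hr3
  rw [hmu3] at hmu
  have hp1 := wf_pos ha11 ha12
  have hp2 := wf_pos ha21 ha22
  have hp3 := wf_pos ha31 ha32
  rcases hw1 with h1|h1 <;> rcases hw2 with h2|h2 <;> rcases hw3 with h3|h3 <;>
    rw [h1, h2, h3] at hnu3 <;>
    first
      | linarith
      | exact mu_contra ha11 ha12 ha21 ha22 ha31 ha32 hm1 hm2 hm3 hmu
          (Or.inl (wf_lemma ha11 ha12 ha21 ha22 ha31 ha32 (by linarith)))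
      | exact mu_contra ha11 ha12 ha21 ha22 ha31 ha32 hm1 hm2 hm3 hmu
          (Or.inr (Or.inl (wf_lemma ha11 ha12 ha31 ha32 ha21 ha22 (by linarith))))
      | exact mu_contra ha11 ha12 ha21 ha22 ha31 ha32 hm1 hm2 hm3 hmu
          (Or.inr (Or.inr (wf_lemma ha21 ha22 ha31 ha32 ha11 ha12 (by linarith))))
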